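/- For 0 ≤ v1 < 1 and 0 ≤ v2 < 1, the Life composed velocity v1 + v2 - v1*v2 is strictly less than the special-relativistic composed velocity (v1+v2)/(1+v1*v2), unless v1 = 0 or v2 = 0, in which case they are equal. -/
import Mathlib

theorem life_lt_relativistic
    (v1 v2 : ℝ) (h1 : 0 ≤ v1) (h1' : v1 < 1) (h2 : 0 ≤ v2) (h2' : v2 < 1) :
    (v1 ≠ 0 → v2 ≠ 0 → v1 + v2 - v1 * v2 < (v1 + v2) / (1 + v1 * v2)) ∧
    ((v1 = 0 ∨ v2 = 0) → v1 + v2 - v1 * v2 = (v1 + v2) / (1 + v1 * v2)) := by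
  have hd : 0 < 1 + v1 * v2 := by nlinarith
  constructor
  · intro hn1 hn2
    rw [lt_div_iff₀ hd]
    have hp1 : 0 < v1 := lt_of_le_of_ne h1 (Ne.symm hn1)
    have hp2 : 0 < v2 := lt_of_le_of_ne h2 (Ne.symm hn2)
    nlinarith [mul_pos (mul_pos hp1 hp2) (mul_pos (sub_pos.mpr h1') (sub_pos.mpr h2'))]
  · rintro (rfl | rfl) <;> simp
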